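/- Let μ be any absolutely continuous probability distribution over N × N real matrices. Then with probability 1, a matrix M drawn from μ has spiky rank at least N/2. -/

import Mathlib

open Matrix MeasureTheory

/-- A blocky matrix: its support is a disjoint union of combinatorial rectangles,
with value 1 on the support and 0 elsewhere. -/
def IsBlocky {F : Type*} [Field F] {m n : Type*} (M : Matrix m n F) : Prop :=
  ∃ (k : ℕ) (S : Fin k → Finset m) (T : Fin k → Finset n),
    (∀ a b, a ≠ b → Disjoint (S a) (S b)) ∧
    (∀ a b, a ≠ b → Disjoint (T a) (T b)) ∧
    (∀ i j, (∃ l, i ∈ S l ∧ j ∈ T l) → M i j = 1) ∧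
    (∀ i j, (¬ ∃ l, i ∈ S l ∧ j ∈ T l) → M i j = 0)

/-- A spiky matrix: the entrywise product of a blocky matrix and a rank-one matrix. -/
def IsSpiky {F : Type*} [Field F] {m n : Type*} (M : Matrix m n F) : Prop :=
  ∃ (B : Matrix m n F) (u : m → F) (v : n → F),
    IsBlocky B ∧ ∀ i j, M i j = B i j * (u i * v j)

/-- The spiky rank: minimum number of spiky matrices summing to `M`. -/
noncomputable def spikyRank {F : Type*} [Field F] {m n : Type*} (M : Matrix m n F) : ℕ :=
  sInf {r | ∃ f : Fin r → Matrix m n F, (∀ i, IsSpiky (f i)) ∧ ∑ i, f i = M}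

/-- The blocky rank: minimum number of blocky matrices whose linear combination equals `M`. -/
noncomputable def blockyRank {F : Type*} [Field F] {m n : Type*} (M : Matrix m n F) : ℕ :=
  sInf {r | ∃ (f : Fin r → Matrix m n F) (c : Fin r → F),
    (∀ i, IsBlocky (f i)) ∧ ∑ i, c i • f i = M}

/-- Sparsity: the number of nonzero entries of a matrix. -/
noncomputable def matSparsity {F : Type*} [Zero F] {m n : Type*} (M : Matrix m n F) : ℕ :=
  {p : m × n | M p.1 p.2 ≠ 0}.ncard

/-- Rank-`r` rigidity: minimum number of entries that must be changed to bring the rank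
down to `r`. -/
noncomputable def rigidity {F : Type*} [Field F] {N : ℕ}
    (M : Matrix (Fin N) (Fin N) F) (r : ℕ) : ℕ :=
  sInf {s | ∃ A C : Matrix (Fin N) (Fin N) F, M = A + C ∧ A.rank ≤ r ∧ matSparsity C ≤ s}

/-- Sign spiky rank: minimum spiky rank over real matrices with the same sign pattern. -/
noncomputable def signSpikyRank {m n : Type*} (M : Matrix m n ℝ) : ℕ :=
  sInf {r | ∃ A : Matrix m n ℝ,
    (∀ i j, Real.sign (A i j) = Real.sign (M i j)) ∧ spikyRank A ≤ r}

/-- Blocky cover number: minimum number of blocky matrices whose supports' union is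
exactly the set of 1-entries of the Boolean matrix `M`. -/
noncomputable def blockyCover {m n : Type*} (M : Matrix m n ℝ) : ℕ :=
  sInf {k | ∃ f : Fin k → Matrix m n ℝ, (∀ l, IsBlocky (f l)) ∧
    ∀ i j, M i j = 1 ↔ ∃ l, f l i j = 1}

section SpikyAux
open Set


/-- The polynomial map from parameters to matrices, for a fixed pattern tuple. -/
noncomputable def spikyMap (r N : ℕ) (P : Fin r → Fin N → Fin N → Bool)
    (w : Fin r → (Fin N → ℝ) × (Fin N → ℝ)) : Fin N → Fin N → ℝ :=
  fun i j => ∑ l, (if P l i j then (w l).1 i * (w l).2 j else 0)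

lemma spikyMap_differentiable (r N : ℕ) (P : Fin r → Fin N → Fin N → Bool) :
    Differentiable ℝ (spikyMap r N P) := by
  rw [differentiable_pi]
  intro i
  rw [differentiable_pi]
  intro j
  apply Differentiable.fun_sum
  intro l _
  by_cases h : P l i j
  · simp only [h, if_true]
    fun_prop
  · simp only [h, if_false]
    exact differentiable_const 0

lemma volume_range_spikyMap (r N : ℕ) (h : 2 * r < N) (P : Fin r → Fin N → Fin N → Bool) :
    volume (Set.range (spikyMap r N P)) = 0 := by
  classical
  set D := (Fin r → (Fin N → ℝ) × (Fin N → ℝ))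
  set E := (Fin N → Fin N → ℝ)
  have hdim : Module.finrank ℝ D < Module.finrank ℝ E := by
    have hD : Module.finrank ℝ D = r * (N + N) := by
      simp [D, Module.finrank_pi_fintype, Module.finrank_prod]
    have hE : Module.finrank ℝ E = N * N := by
      simp [E, Module.finrank_pi_fintype]
    rw [hD, hE]
    nlinarith
  have hle : Module.finrank ℝ D ≤ Module.finrank ℝ E := hdim.le
  let bD := Module.finBasis ℝ D
  let bE := Module.finBasis ℝ E
  let π : E →ₗ[ℝ] D :=
    (bD.equivFun.symm.toLinearMap) ∘ₗ (LinearMap.funLeft ℝ ℝ (Fin.castLE hle)) ∘ₗ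
      bE.equivFun.toLinearMap
  have hπs : Function.Surjective π := by
    have hco : ⇑π = ⇑bD.equivFun.symm ∘ ⇑(LinearMap.funLeft ℝ ℝ (Fin.castLE hle)) ∘
        ⇑bE.equivFun := rfl
    rw [hco]
    exact bD.equivFun.symm.surjective.comp
      ((LinearMap.funLeft_surjective_of_injective ℝ ℝ _ (Fin.castLE_injective hle)).comp
        bE.equivFun.surjective)
  let πc : E →L[ℝ] D := π.toContinuousLinearMap
  set Φ := spikyMap r N P
  set F : E → E := Φ ∘ πc
  have hFd : Differentiable ℝ F :=
    (spikyMap_differentiable r N P).comp πc.differentiable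
  have hdet : ∀ x : E, (fderiv ℝ F x).det = 0 := by
    intro x
    have hcomp : fderiv ℝ F x = (fderiv ℝ Φ (πc x)).comp πc := by
      rw [show F = Φ ∘ πc from rfl,
        fderiv_comp x ((spikyMap_differentiable r N P) (πc x)) (πc.differentiableAt),
        πc.fderiv]
    by_contra hne
    have he := (LinearMap.equivOfDetNeZero (fderiv ℝ F x : E →ₗ[ℝ] E) hne).surjective
    have hrange : LinearMap.range ((fderiv ℝ F x : E →L[ℝ] E) : E →ₗ[ℝ] E) = ⊤ :=
      LinearMap.range_eq_top.2 he
    have hfr : Module.finrank ℝ (LinearMap.range ((fderiv ℝ F x : E →L[ℝ] E) : E →ₗ[ℝ] E))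
        ≤ Module.finrank ℝ D := by
      rw [hcomp]
      calc Module.finrank ℝ (LinearMap.range (((fderiv ℝ Φ (πc x)).comp πc : E →L[ℝ] E) : E →ₗ[ℝ] E))
          ≤ Module.finrank ℝ (LinearMap.range ((fderiv ℝ Φ (πc x) : D →L[ℝ] E) : D →ₗ[ℝ] E)) := by
            apply Submodule.finrank_mono
            show LinearMap.range ((fderiv ℝ Φ (πc x) : D →ₗ[ℝ] E) ∘ₗ (πc : E →ₗ[ℝ] D)) ≤ _
            exact LinearMap.range_comp_le_range _ _
        _ ≤ Module.finrank ℝ D := LinearMap.finrank_range_le _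
    rw [hrange, finrank_top] at hfr
    exact absurd (hfr.trans_lt hdim) (lt_irrefl _)
  have key : volume (F '' Set.univ) = 0 :=
    addHaar_image_eq_zero_of_det_fderivWithin_eq_zero volume
      (f' := fun x => fderiv ℝ F x)
      (fun x _ => ((hFd x).hasFDerivAt).hasFDerivWithinAt)
      (fun x _ => hdet x)
  have hπcs : Function.Surjective ⇑πc := hπs
  have : Set.range Φ = F '' Set.univ := by
    rw [Set.image_univ]
    show Set.range Φ = Set.range (Φ ∘ ⇑πc)
    rw [Set.range_comp, hπcs.range_eq, Set.image_univ]
  rw [this]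
  exact key

/-- Every N×N matrix is a sum of N spiky matrices (one per row). -/
lemma spiky_decomp_exists (N : ℕ) (M : Matrix (Fin N) (Fin N) ℝ) :
    ∃ f : Fin N → Matrix (Fin N) (Fin N) ℝ, (∀ i, IsSpiky (f i)) ∧ ∑ i, f i = M := by
  classical
  refine ⟨fun i => Matrix.of (fun i' j => if i' = i then M i j else 0), ?_, ?_⟩
  · intro i
    refine ⟨Matrix.of (fun i' _ => if i' = i then (1 : ℝ) else 0),
      fun i' => if i' = i then 1 else 0, fun j => M i j, ?_, ?_⟩
    · refine ⟨1, fun _ => {i}, fun _ => Finset.univ, ?_, ?_, ?_, ?_⟩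
      · intro a b hab; exact absurd (Subsingleton.elim a b) hab
      · intro a b hab; exact absurd (Subsingleton.elim a b) hab
      · rintro i' j ⟨l, hi, -⟩
        simp only [Finset.mem_singleton] at hi
        simp [Matrix.of_apply, hi]
      · intro i' j hne
        have : ¬ i' = i := by
          intro hii
          exact hne ⟨0, by simp [hii], Finset.mem_univ _⟩
        simp [Matrix.of_apply, this]
    · intro i' j
      by_cases hii : i' = i <;> simp [Matrix.of_apply, hii]
  · ext i' j
    simp only [Matrix.sum_apply, Matrix.of_apply]
    rw [Finset.sum_ite_eq (Finset.univ) i' (fun i => M i j)]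
    simp

/-- A matrix with a decomposition into r spiky matrices is in the range of some spikyMap. -/
lemma mem_range_spikyMap_of_decomp (r N : ℕ) (M : Fin N → Fin N → ℝ)
    (hM : ∃ f : Fin r → Matrix (Fin N) (Fin N) ℝ,
      (∀ i, IsSpiky (f i)) ∧ ∑ i, f i = Matrix.of M) :
    ∃ P : Fin r → Fin N → Fin N → Bool, M ∈ Set.range (spikyMap r N P) := by
  classical
  obtain ⟨f, hs, hsum⟩ := hM
  choose B u v hB heq using hs
  have hBval : ∀ l i j, B l i j = 1 ∨ B l i j = 0 := by
    intro l i j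
    obtain ⟨k, S, T, -, -, h1, h0⟩ := hB l
    by_cases hex : ∃ p, i ∈ S p ∧ j ∈ T p
    · exact Or.inl (h1 i j hex)
    · exact Or.inr (h0 i j hex)
  refine ⟨fun l i j => decide (B l i j = 1), fun l => (u l, v l), ?_⟩
  funext i j
  have hMij : M i j = ∑ l, f l i j := by
    have h1 : (Matrix.of M) i j = M i j := rfl
    rw [← h1, ← hsum, Matrix.sum_apply]
  show (∑ l, if (decide (B l i j = 1) : Bool) then u l i * v l j else 0) = M i j
  rw [hMij]
  refine Finset.sum_congr rfl fun l _ => ?_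
  rcases hBval l i j with h | h
  · simp [heq, h]
  · have : B l i j ≠ 1 := by rw [h]; exact zero_ne_one
    simp [heq, h, this]

end SpikyAux

/-- For any absolutely continuous probability distribution on N x N real matrices,
almost surely the spiky rank is at least N/2. -/
theorem spikyRank_ae_ge_half (N : ℕ) (μ : Measure (Fin N → Fin N → ℝ))
    [IsProbabilityMeasure μ] (hac : μ ≪ volume) :
    μ {M | (N : ℝ) / 2 ≤ (spikyRank (Matrix.of M) : ℝ)} = 1 := by
  classical
  set S : Set (Fin N → Fin N → ℝ) :=
    {M | ((spikyRank (Matrix.of M) : ℝ)) < (N : ℝ) / 2} with hS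
  have hvol : volume S = 0 := by
    have hsub : S ⊆ ⋃ (r : ℕ) (_ : 2 * r < N) (P : Fin r → Fin N → Fin N → Bool),
        Set.range (spikyMap r N P) := by
      intro M hM
      have hlt : ((spikyRank (Matrix.of M) : ℝ)) < (N : ℝ) / 2 := hM
      set r := spikyRank (Matrix.of M) with hr
      have h2r : 2 * r < N := by
        have h2 : (2 * r : ℝ) < N := by linarith
        exact_mod_cast h2
      have hmem : ∃ f : Fin r → Matrix (Fin N) (Fin N) ℝ,
          (∀ i, IsSpiky (f i)) ∧ ∑ i, f i = Matrix.of M :=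
        Nat.sInf_mem (⟨N, spiky_decomp_exists N (Matrix.of M)⟩ :
          Set.Nonempty {r | ∃ f : Fin r → Matrix (Fin N) (Fin N) ℝ,
            (∀ i, IsSpiky (f i)) ∧ ∑ i, f i = Matrix.of M})
      obtain ⟨P, hP⟩ := mem_range_spikyMap_of_decomp r N M hmem
      exact Set.mem_iUnion.2 ⟨r, Set.mem_iUnion.2 ⟨h2r, Set.mem_iUnion.2 ⟨P, hP⟩⟩⟩
    refine measure_mono_null hsub ?_
    exact measure_iUnion_null fun r => measure_iUnion_null fun h2r =>
      measure_iUnion_null fun P => volume_range_spikyMap r N h2r P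
  have hμS : μ S = 0 := hac hvol
  have hcompl : {M | (N : ℝ) / 2 ≤ (spikyRank (Matrix.of M) : ℝ)} = Sᶜ := by
    ext M
    simp [hS, not_lt]
  rw [hcompl]
  have h1 : μ Set.univ ≤ μ S + μ Sᶜ := by
    conv_lhs => rw [← Set.union_compl_self S]
    exact measure_union_le _ _
  rw [measure_univ, hμS, zero_add] at h1
  exact le_antisymm prob_le_one h1
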